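/- Let q ≥ 1, let a_1,…,a_q ∈ ℂ be pairwise distinct, let w ∈ ℂ with w ≠ a_m for every m, and let g ∈ ℂ∖{0}. Set l = min_{1 ≤ i < j ≤ q} |a_i − a_j| (with l = +∞ and log⁺(2/l) = 0 when q = 1). Then (q−1)·log⁺|w| + log|g| ≤ Σ_{m=1}^q log|w − a_m| + log( Σ_{m=1}^q |g|/|w − a_m| ) + Σ_{m=1}^q log⁺|a_m| + (q−1)·log⁺(2/l) + (q−1)·log 2. -/

import Mathlib

open MeasureTheory Filter Complex Asymptotics

noncomputable section
open scoped Classical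

/-- The order of vanishing of `f` at `z` (negative at a pole), as an element of
`ℤ ∪ {∞}` (`⊤` if `f` vanishes identically near `z`); junk value `0` if `f` is not
meromorphic at `z`. -/
def mord (f : ℂ → ℂ) (z : ℂ) : WithTop ℤ :=
  if h : MeromorphicAt f z then meromorphicOrderAt f z else 0

/-- The pole multiplicity of `f` at `z`. -/
def poleMult (f : ℂ → ℂ) (z : ℂ) : ℕ := (-(WithTop.untopD 0 (mord f z))).toNat

/-- The zero multiplicity of `f` at `z`. -/
def zeroMult (f : ℂ → ℂ) (z : ℂ) : ℕ := (WithTop.untopD 0 (mord f z)).toNat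

/-- `n(t, f)`: the number of poles of `f` in the closed disc of radius `t`,
counted with multiplicity. -/
def cntPole (f : ℂ → ℂ) (t : ℝ) : ℝ :=
  ∑ᶠ z ∈ Metric.closedBall (0 : ℂ) t, (poleMult f z : ℝ)

/-- `n(t, 1/f)`: the number of zeros of `f` in the closed disc of radius `t`,
counted with multiplicity. -/
def cntZero (f : ℂ → ℂ) (t : ℝ) : ℝ :=
  ∑ᶠ z ∈ Metric.closedBall (0 : ℂ) t, (zeroMult f z : ℝ)

/-- `N(r, f)`: the integrated counting function of the poles of `f`. -/
def NevN (f : ℂ → ℂ) (r : ℝ) : ℝ :=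
  (∫ t in (0:ℝ)..r, (cntPole f t - cntPole f 0) / t) + cntPole f 0 * Real.log r

/-- `N(r, 1/f)`: the integrated counting function of the zeros of `f`. -/
def NevN0 (f : ℂ → ℂ) (r : ℝ) : ℝ :=
  (∫ t in (0:ℝ)..r, (cntZero f t - cntZero f 0) / t) + cntZero f 0 * Real.log r

/-- `log⁺ x = max (log x) 0`. -/
def posLog (x : ℝ) : ℝ := max (Real.log x) 0

/-- The point `r·e^{iθ}`. -/
def circ (r θ : ℝ) : ℂ := (r : ℂ) * Complex.exp (θ * Complex.I)

/-- `m(r, f)`: the Nevanlinna proximity function. -/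
def Nevm (f : ℂ → ℂ) (r : ℝ) : ℝ :=
  (2 * Real.pi)⁻¹ * ∫ θ in (0:ℝ)..(2 * Real.pi), posLog (‖f (circ r θ)‖)

/-- `T(r, f)`: the Nevanlinna characteristic. -/
def NevT (f : ℂ → ℂ) (r : ℝ) : ℝ := Nevm f r + NevN f r

/-- `n̄(t, f)`: the number of poles of `f` in the closed disc of radius `t`,
each counted once, ignoring multiplicity. -/
def cntPoleRed (f : ℂ → ℂ) (t : ℝ) : ℝ :=
  ∑ᶠ z ∈ Metric.closedBall (0 : ℂ) t, (if mord f z < 0 then (1:ℝ) else 0)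

/-- `N̄(r, f)`: the integrated counting function of poles, ignoring multiplicity. -/
def NevNbar (f : ℂ → ℂ) (r : ℝ) : ℝ :=
  (∫ t in (0:ℝ)..r, (cntPoleRed f t - cntPoleRed f 0) / t) + cntPoleRed f 0 * Real.log r

/-- `h ∈ S(f)`: `h` is meromorphic in `ℂ` and `T(r,h) = o(T(r,f))` as `r → ∞`
outside a set `E` of finite linear measure. -/
def SmallFn (f h : ℂ → ℂ) : Prop :=
  MeromorphicOn h Set.univ ∧ ∃ E : Set ℝ, volume E < ⊤ ∧
    NevT h =o[atTop ⊓ Filter.principal Eᶜ] NevT f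

/-- The linear differential operator `L(h) = h⁽ⁿ⁾ + α_{n-1}·h⁽ⁿ⁻¹⁾ + ⋯ + α_0·h`. -/
def Lop (n : ℕ) (α : ℕ → ℂ → ℂ) (h : ℂ → ℂ) : ℂ → ℂ :=
  fun z => iteratedDeriv n h z + ∑ j ∈ Finset.range n, α j z * iteratedDeriv j h z

/-- `a` is `(L,f)`-exceptional, where `g = L(f)`: at every point where `f - a` has a
zero of some order, `g` has a zero of at least that order (so the preimage multiset
of `a` under `f` is contained in the zero multiset of `L(f)`). -/
def Exceptional (g f a : ℂ → ℂ) : Prop :=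
  ∀ z : ℂ, 0 < mord (fun w => f w - a w) z → mord (fun w => f w - a w) z ≤ mord g z

/-- Counting function of the zeros of `g` situated at points satisfying `P`,
counted according to their multiplicity as zeros of `g`. -/
def cntZeroOn (g : ℂ → ℂ) (P : ℂ → Prop) (t : ℝ) : ℝ :=
  ∑ᶠ z ∈ Metric.closedBall (0 : ℂ) t, (if P z then (zeroMult g z : ℝ) else 0)

/-- `N|_P(r, 1/g)`: integrated counting function of the zeros of `g` at points
satisfying `P`, counted according to their multiplicity as zeros of `g`. -/
def NevNZeroOn (g : ℂ → ℂ) (P : ℂ → Prop) (r : ℝ) : ℝ :=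
  (∫ t in (0:ℝ)..r, (cntZeroOn g P t - cntZeroOn g P 0) / t) +
    cntZeroOn g P 0 * Real.log r

/-- `θ_{L,f}(a)`, where `g = L(f)`: the index of multiplicity with respect to `L(f)`. -/
def thetaOp (g f a : ℂ → ℂ) : ℝ :=
  Filter.liminf
    (fun r => NevNZeroOn g (fun z => 0 < mord (fun w => f w - a w) z) r / NevT f r) atTop

/-- `θ_{L,f}(∞)`, where `g = L(f)`. -/
def thetaOpInf (g f : ℂ → ℂ) : ℝ :=
  Filter.liminf (fun r => (2 * NevN f r - NevN g r) / NevT f r) atTop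

/-- The Nevanlinna deficiency `δ(a,f)` of the target function `a`. -/
def Nevdelta (f a : ℂ → ℂ) : ℝ :=
  Filter.liminf (fun r => Nevm (fun z => (f z - a z)⁻¹) r / NevT f r) atTop

/-- `δ(∞,f)`. -/
def NevdeltaInf (f : ℂ → ℂ) : ℝ :=
  Filter.liminf (fun r => Nevm f r / NevT f r) atTop

/-- The Valiron deficiency `Δ(a,f)`. -/
def valironDelta (f : ℂ → ℂ) (a : ℂ) : ℝ :=
  1 - Filter.liminf (fun r => NevN0 (fun z => f z - a) r / NevT f r) atTop

/-- The hyper-order `ς(f) = limsup_{r→∞} log log T(r,f) / log r`. -/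
def hyperOrder (f : ℂ → ℂ) : EReal :=
  Filter.limsup (fun r => ((Real.log (Real.log (NevT f r)) / Real.log r : ℝ) : EReal)) atTop

/-- The order of growth `ρ(f) = limsup_{r→∞} log T(r,f) / log r`. -/
def growthOrder (f : ℂ → ℂ) : EReal :=
  Filter.limsup (fun r => ((Real.log (NevT f r) / Real.log r : ℝ) : EReal)) atTop

/-- A subset of `(1,∞)` of finite logarithmic measure. -/
def FiniteLogMeasure (F : Set ℝ) : Prop :=
  F ⊆ Set.Ioi 1 ∧ (∫⁻ t in F, ENNReal.ofReal t⁻¹) < ⊤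

/-- The initial Laurent coefficient `ilc(h, 0)` of `h` at the origin. -/
def ilc (h : ℂ → ℂ) : ℂ :=
  limUnder (nhdsWithin (0 : ℂ) {(0 : ℂ)}ᶜ)
    (fun z => z ^ (-(WithTop.untopD 0 (mord h 0))) * h z)

end

noncomputable section
open scoped Classical

lemma posLog_nonneg' (x : ℝ) : 0 ≤ posLog x := le_max_right _ _

lemma log_le_posLog' (x : ℝ) : Real.log x ≤ posLog x := le_max_left _ _

lemma posLog_mono' {x y : ℝ} (hx : 0 ≤ x) (hxy : x ≤ y) : posLog x ≤ posLog y := by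
  apply max_le _ (le_max_right _ _)
  rcases le_or_gt x 1 with h | h
  · exact le_trans (Real.log_nonpos hx h) (posLog_nonneg' y)
  · exact le_trans (Real.log_le_log (by linarith) hxy) (log_le_posLog' y)

lemma posLog_add_le' {x y : ℝ} (hx : 0 ≤ x) (hy : 0 ≤ y) :
    posLog (x + y) ≤ posLog x + posLog y + Real.log 2 := by
  have h2 : (0:ℝ) ≤ Real.log 2 := Real.log_nonneg (by norm_num)
  have hmax : x + y ≤ 2 * max x y := by
    rcases le_total x y with h | h
    · rw [max_eq_right h]; linarith
    · rw [max_eq_left h]; linarith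
  have h1 : posLog (x + y) ≤ posLog (2 * max x y) :=
    posLog_mono' (by positivity) hmax
  rcases eq_or_lt_of_le (le_max_of_le_left hx) with hm | hm
  · have hx0 : x = 0 := le_antisymm (le_trans (le_max_left x y) hm.symm.le) hx
    have hy0 : y = 0 := le_antisymm (le_trans (le_max_right x y) hm.symm.le) hy
    simp only [hx0, hy0, add_zero, posLog, Real.log_zero, max_self]
    simpa using h2
  · have hlog : Real.log (2 * max x y) = Real.log 2 + Real.log (max x y) :=
      Real.log_mul (by norm_num) (ne_of_gt hm)
    have h3 : posLog (2 * max x y) ≤ Real.log 2 + posLog (max x y) := by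
      apply max_le
      · rw [hlog]; exact (add_le_add_iff_left _).mpr (log_le_posLog' _)
      · have := posLog_nonneg' (max x y); linarith
    have h4 : posLog (max x y) ≤ posLog x + posLog y := by
      rcases le_total x y with h | h
      · rw [max_eq_right h]; have := posLog_nonneg' x; linarith
      · rw [max_eq_left h]; have := posLog_nonneg' y; linarith
    linarith

lemma posLog_le_log_add' {x : ℝ} (hx : 0 < x) :
    posLog x ≤ Real.log x + posLog x⁻¹ := by
  apply max_le
  · have := posLog_nonneg' x⁻¹; linarith
  · have : Real.log x⁻¹ ≤ posLog x⁻¹ := log_le_posLog' _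
    rw [Real.log_inv] at this; linarith

/-- The elementary pointwise inequality underlying the second main
theorem with general ramification-type term. -/
theorem pointwise_smt_inequality
    (q : ℕ) (hq : 1 ≤ q) (a : Fin q → ℂ) (ha : Function.Injective a)
    (w : ℂ) (hw : ∀ m : Fin q, w ≠ a m) (g : ℂ) (hg : g ≠ 0)
    (l : ℝ) (hl : l = sInf {d : ℝ | ∃ i j : Fin q, i ≠ j ∧ d = ‖a i - a j‖}) :
    ((q : ℝ) - 1) * posLog (‖w‖) + Real.log (‖g‖) ≤
      (∑ m : Fin q, Real.log (‖w - a m‖)) +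
      Real.log (∑ m : Fin q, ‖g‖ / ‖w - a m‖) +
      (∑ m : Fin q, posLog (‖a m‖)) +
      ((q : ℝ) - 1) * posLog (2 / l) + ((q : ℝ) - 1) * Real.log 2 := by
  obtain ⟨s, -, hs⟩ := Finset.exists_min_image (Finset.univ : Finset (Fin q))
    (fun m => ‖w - a m‖) ⟨⟨0, hq⟩, Finset.mem_univ _⟩
  have habs : ∀ m, 0 < ‖w - a m‖ := fun m =>
    norm_pos_iff.mpr (sub_ne_zero.mpr (hw m))
  have hgpos : 0 < ‖g‖ := norm_pos_iff.mpr hg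
  -- Step 1 : the log of the sum dominates the log of the `s`-term
  have hlog_sum : Real.log (‖g‖) - Real.log (‖w - a s‖) ≤
      Real.log (∑ m : Fin q, ‖g‖ / ‖w - a m‖) := by
    rw [← Real.log_div (ne_of_gt hgpos) (ne_of_gt (habs s))]
    apply Real.log_le_log (div_pos hgpos (habs s))
    exact Finset.single_le_sum (f := fun m => ‖g‖ / ‖w - a m‖)
      (fun m _ => by positivity) (Finset.mem_univ s)
  -- Step 2 : key pointwise inequality for `m ≠ s`
  have key : ∀ m : Fin q, m ≠ s →
      posLog (‖w‖) ≤ Real.log (‖w - a m‖) +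
        posLog (‖a m‖) + posLog (2 / l) + Real.log 2 := by
    intro m hm
    set S : Set ℝ := {d : ℝ | ∃ i j : Fin q, i ≠ j ∧ d = ‖a i - a j‖} with hS
    have hSfin : S.Finite := by
      apply Set.Finite.subset
        (Set.finite_range (fun p : Fin q × Fin q => ‖a p.1 - a p.2‖))
      rintro d ⟨i, j, -, rfl⟩
      exact ⟨(i, j), rfl⟩
    have hmem : ‖a m - a s‖ ∈ S := ⟨m, s, hm, rfl⟩
    have hlmem : l ∈ S := by
      rw [hl]; exact Set.Nonempty.csInf_mem ⟨_, hmem⟩ hSfin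
    have hlpos : 0 < l := by
      obtain ⟨i, j, hij, hd⟩ := hlmem
      rw [hd]
      exact norm_pos_iff.mpr (sub_ne_zero.mpr (fun h => hij (ha h)))
    have hl_le : l ≤ ‖a m - a s‖ := by
      rw [hl]; exact csInf_le hSfin.bddBelow hmem
    have htri : ‖a m - a s‖ ≤ 2 * ‖w - a m‖ := by
      have h1 : ‖a m - a s‖ ≤
          ‖a m - w‖ + ‖w - a s‖ := by
        have := norm_sub_le_norm_sub_add_norm_sub (a m) w (a s); linarith
      have h2 : ‖a m - w‖ = ‖w - a m‖ :=
        norm_sub_rev _ _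
      have h3 := hs m (Finset.mem_univ m)
      linarith
    have hl2 : l ≤ 2 * ‖w - a m‖ := le_trans hl_le htri
    -- |w| ≤ |w - a m| + |a m|
    have hwle : ‖w‖ ≤ ‖w - a m‖ + ‖a m‖ := by
      have := norm_add_le (w - a m) (a m); simpa using this
    have h1 : posLog (‖w‖) ≤
        posLog (‖w - a m‖ + ‖a m‖) :=
      posLog_mono' (norm_nonneg _) hwle
    have h2 : posLog (‖w - a m‖ + ‖a m‖) ≤
        posLog (‖w - a m‖) + posLog (‖a m‖) + Real.log 2 :=
      posLog_add_le' (norm_nonneg _) (norm_nonneg _)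
    have h3 : posLog (‖w - a m‖) ≤
        Real.log (‖w - a m‖) + posLog ((‖w - a m‖)⁻¹) :=
      posLog_le_log_add' (habs m)
    have h4 : posLog ((‖w - a m‖)⁻¹) ≤ posLog (2 / l) := by
      apply posLog_mono' (by positivity)
      rw [inv_le_iff_one_le_mul₀ (habs m), div_mul_eq_mul_div, le_div_iff₀ hlpos]
      linarith
    linarith
  -- Step 3 : sum the key inequality over `m ≠ s`
  have hcard : (Finset.univ.erase s).card = q - 1 := by
    rw [Finset.card_erase_of_mem (Finset.mem_univ s), Finset.card_univ, Fintype.card_fin]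
  have hqcast : ((q - 1 : ℕ) : ℝ) = (q : ℝ) - 1 := by
    have : (1:ℕ) ≤ q := hq
    push_cast [Nat.cast_sub this]; ring
  have hsum : ((q : ℝ) - 1) * posLog (‖w‖) ≤
      (∑ m ∈ Finset.univ.erase s, Real.log (‖w - a m‖)) +
      (∑ m ∈ Finset.univ.erase s, posLog (‖a m‖)) +
      ((q : ℝ) - 1) * posLog (2 / l) + ((q : ℝ) - 1) * Real.log 2 := by
    have := Finset.sum_le_sum (s := Finset.univ.erase s)
      (f := fun _ => posLog (‖w‖))
      (g := fun m => Real.log (‖w - a m‖) +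
        posLog (‖a m‖) + posLog (2 / l) + Real.log 2)
      (fun m hm => key m (Finset.ne_of_mem_erase hm))
    simpa [Finset.sum_add_distrib, Finset.sum_const, hcard, hqcast, nsmul_eq_mul,
      mul_comm, mul_left_comm, add_assoc] using this
  have herase1 : (∑ m ∈ Finset.univ.erase s, Real.log (‖w - a m‖)) +
      Real.log (‖w - a s‖) =
      ∑ m : Fin q, Real.log (‖w - a m‖) :=
    Finset.sum_erase_add _ _ (Finset.mem_univ s)
  have herase2 : (∑ m ∈ Finset.univ.erase s, posLog (‖a m‖)) ≤
      ∑ m : Fin q, posLog (‖a m‖) :=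
    Finset.sum_le_sum_of_subset_of_nonneg (Finset.subset_univ _)
      (fun m _ _ => posLog_nonneg' _)
  linarith

end
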